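/- (Carleson Embedding Theorem with sharp constant) Let μ be a Radon measure on ℝ^N and let nonnegative numbers a_I, I ∈ D, satisfy the Carleson condition Σ_{I∈D, I⊆J} a_I ≤ A·μ(J) for every J ∈ D. Then for every measurable f ≥ 0 and every p ∈ (1,∞), Σ_{I∈D} ( μ(I)⁻¹ ∫_I f dμ )^p · a_I ≤ (p′)^p · A · ‖f‖^p_{L^p(μ)}, where p′ = p/(p−1) (terms with μ(I) = 0 are omitted from the sum). -/

import Mathlib

open MeasureTheory Set Matrix
open scoped ENNReal BigOperators NNReal Pointwise

noncomputable section

namespace CBD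

/-- The Euclidean norm of a vector in `ℝ^n` given as a plain function. -/
def vnorm {n : ℕ} (v : Fin n → ℝ) : ℝ := Real.sqrt (∑ i, v i ^ 2)

/-- An axis-parallel half-open cube in `ℝ^N`. -/
structure Cube (N : ℕ) where
  corner : Fin N → ℝ
  side : ℝ
  side_pos : 0 < side

namespace Cube

variable {N : ℕ}

/-- The subset of `ℝ^N` determined by the cube. -/
def set (Q : Cube N) : Set (Fin N → ℝ) :=
  {x | ∀ i, Q.corner i ≤ x i ∧ x i < Q.corner i + Q.side}

/-- The volume `|Q|` of the cube. -/
def vol (Q : Cube N) : ℝ := Q.side ^ N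

/-- The concentric dilation `rQ` (intended for `r ≥ 1`; implemented with `max r 1`). -/
def dilate (Q : Cube N) (r : ℝ) : Cube N where
  corner := fun i => Q.corner i + Q.side / 2 - max r 1 * Q.side / 2
  side := max r 1 * Q.side
  side_pos := mul_pos (lt_of_lt_of_le one_pos (le_max_right r 1)) Q.side_pos

/-- `Q` belongs to the standard dyadic lattice `D`:
`Q = 2^{-k}([0,1)^N + m)` for some `k ∈ ℤ`, `m ∈ ℤ^N`. -/
def IsDyadic (Q : Cube N) : Prop :=
  ∃ (k : ℤ) (m : Fin N → ℤ), Q.side = (2:ℝ) ^ (-k) ∧ ∀ i, Q.corner i = (2:ℝ) ^ (-k) * (m i : ℝ)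

/-- The subcube of `Q` of dyadic generation `k` in position `m`. -/
def subCube (Q : Cube N) (k : ℕ) (m : Fin N → ℕ) : Cube N where
  corner := fun i => Q.corner i + Q.side * (m i : ℝ) / 2 ^ k
  side := Q.side / 2 ^ k
  side_pos := div_pos Q.side_pos (by positivity)

/-- `R` is a dyadic subcube of `Q` (relative dyadic lattice `D(Q)`, including `Q` itself). -/
def IsDyadicSub (Q R : Cube N) : Prop :=
  ∃ (k : ℕ) (m : Fin N → ℕ), (∀ i, m i < 2 ^ k) ∧ R = Q.subCube k m

end Cube

variable {N d : ℕ}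

/-- The dyadic lattice, as a set of cubes. -/
def dyadicCubes (N : ℕ) : Set (Cube N) := {Q | Q.IsDyadic}

/-- All cubes in `ℝ^N`. -/
def allCubes (N : ℕ) : Set (Cube N) := Set.univ

/-- The average `⟨g⟩_Q = |Q|⁻¹ ∫_Q g`. -/
def avg (Q : Cube N) (g : (Fin N → ℝ) → ℝ) : ℝ :=
  (Q.vol)⁻¹ * ∫ y in Q.set, g y

/-- The entrywise average `⟨W⟩_Q` of a matrix-valued function. -/
def matAvg (Q : Cube N) (W : (Fin N → ℝ) → Matrix (Fin d) (Fin d) ℝ) :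
    Matrix (Fin d) (Fin d) ℝ :=
  Matrix.of fun i j => avg Q fun x => W x i j

/-- The positive semidefinite square root of a matrix (junk value `0` off psd matrices). -/
def msqrt (A : Matrix (Fin d) (Fin d) ℝ) : Matrix (Fin d) (Fin d) ℝ :=
  letI := Classical.dec A.PosSemidef
  if h : A.PosSemidef then
    h.1.eigenvectorUnitary.1 * diagonal ((↑) ∘ (h.1.eigenvalues · |>.sqrt)) *
      (star h.1.eigenvectorUnitary : Matrix (Fin d) (Fin d) ℝ)
  else 0

/-- The `ℓ² → ℓ²` operator norm of a `d × d` matrix. -/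
def matOpNorm (A : Matrix (Fin d) (Fin d) ℝ) : ℝ :=
  sSup {t | ∃ v : Fin d → ℝ, vnorm v ≤ 1 ∧ t = vnorm (A.mulVec v)}

/-- A `d`-dimensional matrix weight: locally integrable, positive semidefinite values. -/
def IsMatrixWeight (W : (Fin N → ℝ) → Matrix (Fin d) (Fin d) ℝ) : Prop :=
  (∀ x, (W x).PosSemidef) ∧ ∀ i j, LocallyIntegrable (fun x => W x i j) volume

/-- A scalar weight: nonnegative and locally integrable. -/
def IsScalarWeight (w : (Fin N → ℝ) → ℝ) : Prop :=
  (∀ x, 0 ≤ w x) ∧ LocallyIntegrable w volume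

/-- The maximal function adapted to the cube `Q`:
`M_Q w(x) = sup {⟨w⟩_R : R ∈ D(Q), x ∈ R}` (and `0` off `Q`). -/
def MQ (Q : Cube N) (w : (Fin N → ℝ) → ℝ) (x : Fin N → ℝ) : ℝ :=
  sSup ({0} ∪ {t | ∃ R : Cube N, Q.IsDyadicSub R ∧ x ∈ R.set ∧ t = avg R w})

/-- Admissible `A∞` constants of a scalar weight, over a collection `𝒬` of cubes. -/
def AinftyOn (𝒬 : Set (Cube N)) (w : (Fin N → ℝ) → ℝ) : Set ℝ :=
  {C | 0 ≤ C ∧ ∀ Q ∈ 𝒬, avg Q (MQ Q w) ≤ C * avg Q w}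

/-- The `A∞` characteristic (best admissible constant) of a scalar weight. -/
def AinftyChar (𝒬 : Set (Cube N)) (w : (Fin N → ℝ) → ℝ) : ℝ := sInf (AinftyOn 𝒬 w)

/-- The scalar weight `w_e(x) = (W(x)e, e)` associated to a matrix weight and `e ∈ ℝ^d`. -/
def we (W : (Fin N → ℝ) → Matrix (Fin d) (Fin d) ℝ) (e : Fin d → ℝ) :
    (Fin N → ℝ) → ℝ := fun x => e ⬝ᵥ (W x).mulVec e

/-- Admissible constants for the scalar `A∞` characteristic of a matrix weight. -/
def matAinftyScOn (𝒬 : Set (Cube N)) (W : (Fin N → ℝ) → Matrix (Fin d) (Fin d) ℝ) : Set ℝ :=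
  {C | 0 ≤ C ∧ ∀ e : Fin d → ℝ, ∀ Q ∈ 𝒬, avg Q (MQ Q (we W e)) ≤ C * avg Q (we W e)}

/-- The scalar `A∞` characteristic `[W]^{sc}_{A∞} = sup_e [w_e]_{A∞}` of a matrix weight. -/
def matAinftyScChar (𝒬 : Set (Cube N)) (W : (Fin N → ℝ) → Matrix (Fin d) (Fin d) ℝ) : ℝ :=
  sInf (matAinftyScOn 𝒬 W)

/-- Admissible constants for the two-weight matrix `A₂` characteristic
`[W,V]_{A₂} = sup_Q ‖⟨W⟩_Q^{1/2} ⟨V⟩_Q^{1/2}‖²`. -/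
def A2pairOn (𝒬 : Set (Cube N)) (W V : (Fin N → ℝ) → Matrix (Fin d) (Fin d) ℝ) : Set ℝ :=
  {C | ∀ Q ∈ 𝒬, matOpNorm (msqrt (matAvg Q W) * msqrt (matAvg Q V)) ^ 2 ≤ C}

/-- The two-weight matrix `A₂` characteristic. -/
def A2pairChar (𝒬 : Set (Cube N)) (W V : (Fin N → ℝ) → Matrix (Fin d) (Fin d) ℝ) : ℝ :=
  sInf (A2pairOn 𝒬 W V)

/-- Admissible constants for the scalar `A₂` characteristic `sup_Q ⟨w⟩_Q ⟨w⁻¹⟩_Q`. -/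
def scalarA2On (𝒬 : Set (Cube N)) (w : (Fin N → ℝ) → ℝ) : Set ℝ :=
  {C | ∀ Q ∈ 𝒬, avg Q w * avg Q (fun x => (w x)⁻¹) ≤ C}

/-- The scalar `A₂` characteristic. -/
def scalarA2Char (𝒬 : Set (Cube N)) (w : (Fin N → ℝ) → ℝ) : ℝ := sInf (scalarA2On 𝒬 w)

/-- An `ω`-Calderón–Zygmund operator on `ℝ^N`: a linear operator, bounded on `L²`,
with a kernel representation off the support, whose kernel satisfies the standard size
condition and the `ω`-smoothness condition, `ω` being a modulus of continuity. -/
structure CZO (N : ℕ) where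
  op : ((Fin N → ℝ) → ℝ) →ₗ[ℝ] ((Fin N → ℝ) → ℝ)
  K : (Fin N → ℝ) → (Fin N → ℝ) → ℝ
  ω : ℝ → ℝ
  CK : ℝ
  normBound : ℝ
  bounded : ∀ f : (Fin N → ℝ) → ℝ, MemLp f 2 volume →
    MemLp (op f) 2 volume ∧
      eLpNorm (op f) 2 volume ≤ ENNReal.ofReal normBound * eLpNorm f 2 volume
  repr : ∀ f : (Fin N → ℝ) → ℝ, MemLp f 2 volume → ∀ x ∉ tsupport f,
    op f x = ∫ y, K x y * f y
  size : ∀ x y : Fin N → ℝ, x ≠ y → |K x y| ≤ CK / vnorm (x - y) ^ N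
  smooth : ∀ x x' y : Fin N → ℝ, x ≠ y → vnorm (x - x') ≤ vnorm (x - y) / 2 →
    |K x y - K x' y| + |K y x - K y x'| ≤
      ω (vnorm (x - x') / vnorm (x - y)) / vnorm (x - y) ^ N
  omega_zero : ω 0 = 0
  omega_mono : MonotoneOn ω (Set.Ici 0)
  omega_subadd : ∀ s t : ℝ, 0 ≤ s → 0 ≤ t → ω (s + t) ≤ ω s + ω t

/-- The Dini condition `∫₀¹ ω(t) dt/t < ∞` for a modulus of continuity. -/
def Dini (ω : ℝ → ℝ) : Prop :=
  IntegrableOn (fun t => ω t / t) (Set.Ioc (0:ℝ) 1) volume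

/-- Componentwise (i.e. `T ⊗ I_d`) action of a scalar operator on vector-valued functions. -/
def vecApply (T : ((Fin N → ℝ) → ℝ) → ((Fin N → ℝ) → ℝ))
    (f : (Fin N → ℝ) → Fin d → ℝ) : (Fin N → ℝ) → Fin d → ℝ :=
  fun x i => T (fun y => f y i) x

/-- `T` maps `L²` to `L²` with operator norm at most `M`. -/
def L2OpNormLe (T : ((Fin N → ℝ) → ℝ) → ((Fin N → ℝ) → ℝ)) (M : ℝ) : Prop :=
  ∀ f : (Fin N → ℝ) → ℝ, MemLp f 2 volume →
    MemLp (T f) 2 volume ∧ eLpNorm (T f) 2 volume ≤ ENNReal.ofReal M * eLpNorm f 2 volume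

/-- `T` is bounded on `L²`. -/
def L2Bounded (T : ((Fin N → ℝ) → ℝ) → ((Fin N → ℝ) → ℝ)) : Prop :=
  ∃ M : ℝ, L2OpNormLe T M

/-- The family of kernels of a (generalized big) Haar shift of complexity `r`:
`K_Q` is supported on `Q × Q`, bounded by `|Q|⁻¹`, constant on products of
`(r+1)`-st generation dyadic subcubes of `Q`, and vanishes for non-dyadic `Q`. -/
structure HaarShiftKernel (N : ℕ) (r : ℕ) where
  K : Cube N → (Fin N → ℝ) → (Fin N → ℝ) → ℝ
  measK : ∀ Q : Cube N, Measurable (Function.uncurry (K Q))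
  suppK : ∀ Q : Cube N, ∀ x y, K Q x y ≠ 0 → x ∈ Q.set ∧ y ∈ Q.set
  bddK : ∀ Q : Cube N, ∀ x y, |K Q x y| ≤ (Cube.vol Q)⁻¹
  constK : ∀ Q : Cube N, ∀ m m' : Fin N → ℕ,
    (∀ i, m i < 2 ^ (r + 1)) → (∀ i, m' i < 2 ^ (r + 1)) →
    ∀ x x' y y', x ∈ (Q.subCube (r + 1) m).set → x' ∈ (Q.subCube (r + 1) m).set →
      y ∈ (Q.subCube (r + 1) m').set → y' ∈ (Q.subCube (r + 1) m').set →
      K Q x y = K Q x' y'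
  dyadicK : ∀ Q : Cube N, ¬Q.IsDyadic → K Q = 0

/-- The operator `𝕊 = Σ_{Q ∈ D} T_Q` associated to a family of Haar shift kernels. -/
def hsApply {r : ℕ} (S : HaarShiftKernel N r) (f : (Fin N → ℝ) → ℝ) : (Fin N → ℝ) → ℝ :=
  fun x => ∑' Q : Cube N, ∫ y, S.K Q x y * f y

/-- The cancellation conditions `T_Q 1_Q = 0`, `T_Q^* 1_Q = 0` making a generalized
big Haar shift a big Haar shift. -/
def IsBigShift {r : ℕ} (S : HaarShiftKernel N r) : Prop :=
  (∀ Q : Cube N, ∀ x, (∫ y, S.K Q x y) = 0) ∧ (∀ Q : Cube N, ∀ y, (∫ x, S.K Q x y) = 0)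

/-- The sublattice `D̃ = ∪_j D_{k+(r+1)j}` of the dyadic lattice. -/
def Dtilde (N r k : ℕ) : Set (Cube N) :=
  {Q | Q.IsDyadic ∧ ∃ j : ℤ, Q.side = (2:ℝ) ^ (-((k : ℤ) + (r + 1) * j))}

/-- The Haar shift is `r`-separated with lattice parameter `k`:
`T_Q ≠ 0` only for `Q ∈ D̃`. -/
def SeparatedKernel {r : ℕ} (S : HaarShiftKernel N r) (k : ℕ) : Prop :=
  ∀ Q : Cube N, S.K Q ≠ 0 → Q ∈ Dtilde N r k

/-- The martingale difference `Δ_R b = Σ_{R' child of R} ⟨b⟩_{R'} 1_{R'} - ⟨b⟩_R 1_R`. -/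
def haarDelta (R : Cube N) (b : (Fin N → ℝ) → ℝ) (x : Fin N → ℝ) : ℝ :=
  (∑ m : Fin N → Fin 2, Set.indicator (R.subCube 1 fun i => (m i : ℕ)).set
      (fun _ => avg (R.subCube 1 fun i => (m i : ℕ)) b) x)
    - Set.indicator R.set (fun _ => avg R b) x

/-- The paraproduct of order `r` with symbol `b`:
`Π_b^r f = Σ_{Q ∈ D} ⟨f⟩_Q Σ_{R ∈ ch^r Q} Δ_R b`. -/
def paraApply (r : ℕ) (b f : (Fin N → ℝ) → ℝ) : (Fin N → ℝ) → ℝ :=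
  fun x => ∑' Q : dyadicCubes N,
    avg Q.val f * ∑ m : Fin N → Fin (2 ^ r), haarDelta (Q.val.subCube r fun i => (m i : ℕ)) b x

/-- The paraproduct `Π_b^r` is `r`-separated with lattice parameter `k`. -/
def SeparatedPara (r : ℕ) (b : (Fin N → ℝ) → ℝ) (k : ℕ) : Prop :=
  ∀ Q : Cube N, Q.IsDyadic →
    (∃ x, (∑ m : Fin N → Fin (2 ^ r), haarDelta (Q.subCube r fun i => (m i : ℕ)) b x) ≠ 0) →
    Q ∈ Dtilde N r k

/-- `T` is a big Haar shift of complexity `r`, or a paraproduct of order `r`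
with `L²` norm at most `2^{-Nr/2}`. -/
def IsShiftOrParaproduct (N r : ℕ) (T : ((Fin N → ℝ) → ℝ) → ((Fin N → ℝ) → ℝ)) : Prop :=
  (∃ S : HaarShiftKernel N r, IsBigShift S ∧ L2Bounded (hsApply S) ∧ T = hsApply S) ∨
  (∃ b : (Fin N → ℝ) → ℝ, LocallyIntegrable b volume ∧
      L2OpNormLe (paraApply r b) (Real.sqrt ((2:ℝ) ^ (N * r)))⁻¹ ∧ T = paraApply r b)

/-- `T` is an `r`-separated big Haar shift of complexity `r`, or an `r`-separated
paraproduct of order `r` with `L²` norm at most `2^{-Nr/2}`; `k ≤ r` is the lattice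
parameter of the separation sublattice `D̃`. -/
def IsSeparatedShiftOrParaproduct (N r k : ℕ)
    (T : ((Fin N → ℝ) → ℝ) → ((Fin N → ℝ) → ℝ)) : Prop :=
  k ≤ r ∧
  ((∃ S : HaarShiftKernel N r, IsBigShift S ∧ L2Bounded (hsApply S) ∧
      SeparatedKernel S k ∧ T = hsApply S) ∨
   (∃ b : (Fin N → ℝ) → ℝ, LocallyIntegrable b volume ∧
      L2OpNormLe (paraApply r b) (Real.sqrt ((2:ℝ) ^ (N * r)))⁻¹ ∧
      SeparatedPara r b k ∧ T = paraApply r b))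

/-- The convex-body average `⟨⟨f⟩⟩_Q = {⟨φ f⟩_Q : ‖φ‖_∞ ≤ 1}`. -/
def cbAvg (Q : Cube N) (f : (Fin N → ℝ) → Fin d → ℝ) : Set (Fin d → ℝ) :=
  {v | ∃ φ : (Fin N → ℝ) → ℝ, Measurable φ ∧ (∀ x, |φ x| ≤ 1) ∧
        v = fun i => avg Q fun x => φ x * f x i}

/-- A weakly `η`-sparse family of cubes: there are pairwise disjoint measurable
subsets `E_Q ⊆ Q` with `|E_Q| ≥ η |Q|`. -/
def WeaklySparse (S : Set (Cube N)) (η : ℝ) : Prop :=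
  ∃ E : Cube N → Set (Fin N → ℝ),
    (∀ Q ∈ S, E Q ⊆ Q.set ∧ MeasurableSet (E Q) ∧ ENNReal.ofReal (η * Q.vol) ≤ volume (E Q)) ∧
    S.PairwiseDisjoint E

/-- The value at `x` of the convex-body sparse operator
`𝐋_S f = Σ_{Q ∈ S} ⟨⟨f⟩⟩_Q 1_Q` (an infinite Minkowski sum): all convergent sums
`Σ_Q g(Q)` with `g(Q) ∈ ⟨⟨f⟩⟩_Q` whenever `Q ∈ S` contains `x`, and `g(Q) = 0` otherwise. -/
def sparseBody (S : Set (Cube N)) (f : (Fin N → ℝ) → Fin d → ℝ) (x : Fin N → ℝ) :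
    Set (Fin d → ℝ) :=
  {v | ∃ g : Cube N → Fin d → ℝ,
        (∀ Q : Cube N, Q ∈ S ∧ x ∈ Q.set → g Q ∈ cbAvg Q f) ∧
        (∀ Q : Cube N, ¬(Q ∈ S ∧ x ∈ Q.set) → g Q = 0) ∧ HasSum g v}

/-- The `S`-children of `Q`: maximal cubes of `S` strictly contained in `Q`. -/
def sChildren (S : Set (Cube N)) (Q : Cube N) : Set (Cube N) :=
  {R | R ∈ S ∧ R.set ⊂ Q.set ∧ ¬∃ R' ∈ S, R.set ⊂ R'.set ∧ R'.set ⊂ Q.set}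

/-- A classical `ε`-sparse family of dyadic cubes: `Σ_{R ∈ ch_S(Q)} |R| ≤ ε |Q|`. -/
def EpsSparse (S : Set (Cube N)) (ε : ℝ) : Prop :=
  (∀ Q ∈ S, Q.IsDyadic) ∧
  ∀ Q ∈ S, ∀ F : Finset (Cube N), ↑F ⊆ sChildren S Q → ∑ R ∈ F, R.vol ≤ ε * Q.vol

/-- A dyadic `λ`-Carleson family: `Σ_{R ∈ S, R ⊆ Q} |R| ≤ λ |Q|` for all `Q ∈ S`. -/
def DyadicCarleson (S : Set (Cube N)) (lam : ℝ) : Prop :=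
  (∀ Q ∈ S, Q.IsDyadic) ∧
  ∀ Q ∈ S, ∀ F : Finset (Cube N), (↑F ⊆ {R | R ∈ S ∧ R.set ⊆ Q.set}) →
    ∑ R ∈ F, R.vol ≤ lam * Q.vol

/-- A simple sparse family: every cube of `S` has at most one `S`-child. -/
def SimpleSparse (S : Set (Cube N)) : Prop :=
  (∀ Q ∈ S, Q.IsDyadic) ∧ ∀ Q ∈ S, (sChildren S Q).Subsingleton

end CBD

end
namespace CBD

-- AUX START
section Aux

open scoped ENNReal NNReal

variable {N : ℕ}

lemma dyad_int {k l : ℤ} (hlk : l ≤ k) (m n : ℤ) :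
    Ico ((2:ℝ)^(-k) * m) ((2:ℝ)^(-k) * (m+1)) ⊆ Ico ((2:ℝ)^(-l) * n) ((2:ℝ)^(-l) * (n+1)) ∨
    Disjoint (Ico ((2:ℝ)^(-k) * m) ((2:ℝ)^(-k) * (m+1)))
      (Ico ((2:ℝ)^(-l) * n) ((2:ℝ)^(-l) * (n+1))) := by
  have h2 : (0:ℝ) < (2:ℝ)^(-k) := by positivity
  set s : ℤ := 2 ^ (k - l).toNat with hs
  have hsl : (2:ℝ)^(-l) = (2:ℝ)^(-k) * (s:ℝ) := by
    have : ((s:ℝ)) = (2:ℝ) ^ (k - l) := by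
      rw [hs]; push_cast
      rw [← zpow_natCast, Int.toNat_of_nonneg (by omega)]
    rw [this, ← zpow_add₀ (two_ne_zero)]
    ring_nf
  have key : ∀ q : ℤ, (2:ℝ)^(-l) * q = (2:ℝ)^(-k) * (s * q : ℤ) := by
    intro q; rw [hsl]; push_cast; ring
  rcases le_or_gt (s * n) m with h1 | h1
  · rcases le_or_gt (m + 1) (s * (n + 1)) with h2' | h2'
    · left
      intro x hx
      simp only [mem_Ico] at hx ⊢
      constructor
      · calc (2:ℝ)^(-l) * n = (2:ℝ)^(-k) * ((s * n : ℤ):ℝ) := key n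
          _ ≤ (2:ℝ)^(-k) * m := by
              apply mul_le_mul_of_nonneg_left _ h2.le
              exact_mod_cast Int.cast_le.mpr h1
          _ ≤ x := hx.1
      · calc x < (2:ℝ)^(-k) * (m+1) := hx.2
          _ ≤ (2:ℝ)^(-k) * ((s * (n+1) : ℤ):ℝ) := by
              apply mul_le_mul_of_nonneg_left _ h2.le
              exact_mod_cast Int.cast_le.mpr h2'
          _ = (2:ℝ)^(-l) * (n+1) := by rw [← key (n+1)]; push_cast; ring
    · right
      rw [Set.disjoint_left]
      intro x hx hx'
      simp only [mem_Ico] at hx hx'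
      have : (2:ℝ)^(-l) * (n+1) ≤ (2:ℝ)^(-k) * m := by
        calc (2:ℝ)^(-l) * (n+1) = (2:ℝ)^(-k) * ((s * (n+1) : ℤ):ℝ) := by
              rw [← key (n+1)]; push_cast; ring
          _ ≤ (2:ℝ)^(-k) * m := by
              apply mul_le_mul_of_nonneg_left _ h2.le
              exact_mod_cast Int.cast_le.mpr (Int.lt_add_one_iff.mp h2')
      linarith [hx.1, hx'.2]
  · right
    rw [Set.disjoint_left]
    intro x hx hx'
    simp only [mem_Ico] at hx hx'
    have : (2:ℝ)^(-k) * (m+1) ≤ (2:ℝ)^(-l) * n := by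
      calc (2:ℝ)^(-k) * (m+1) ≤ (2:ℝ)^(-k) * ((s * n : ℤ):ℝ) := by
            apply mul_le_mul_of_nonneg_left _ h2.le
            exact_mod_cast Int.cast_le.mpr (Int.add_one_le_iff.mpr h1)
        _ = (2:ℝ)^(-l) * n := (key n).symm
    linarith [hx.2, hx'.1]

lemma cube_mem_iff {Q : Cube N} {k : ℤ} {m : Fin N → ℤ} (hside : Q.side = (2:ℝ)^(-k))
    (hcorner : ∀ i, Q.corner i = (2:ℝ)^(-k) * (m i : ℝ)) (x : Fin N → ℝ) :
    x ∈ Q.set ↔ ∀ i, x i ∈ Ico ((2:ℝ)^(-k) * (m i)) ((2:ℝ)^(-k) * ((m i) + 1)) := by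
  unfold Cube.set
  simp only [mem_setOf_eq, mem_Ico]
  constructor <;> intro h i <;>
    [skip; skip] <;>
    · have := h i
      rw [hside, hcorner i] at *
      constructor
      · linarith [this.1]
      · have h2 := this.2
        nlinarith [h2]

lemma dyadic_subset_or_disjoint {I J : Cube N} (hI : I.IsDyadic) (hJ : J.IsDyadic) :
    I.set ⊆ J.set ∨ J.set ⊆ I.set ∨ Disjoint I.set J.set := by
  obtain ⟨k, m, hks, hkc⟩ := hI
  obtain ⟨l, n, hls, hlc⟩ := hJ
  have main : ∀ (I J : Cube N) (k l : ℤ) (m n : Fin N → ℤ),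
      I.side = (2:ℝ)^(-k) → (∀ i, I.corner i = (2:ℝ)^(-k) * (m i : ℝ)) →
      J.side = (2:ℝ)^(-l) → (∀ i, J.corner i = (2:ℝ)^(-l) * (n i : ℝ)) →
      l ≤ k → I.set ⊆ J.set ∨ Disjoint I.set J.set := by
    intro I J k l m n hks hkc hls hlc hlk
    by_cases hall : ∀ i, Ico ((2:ℝ)^(-k) * (m i)) ((2:ℝ)^(-k) * ((m i) + 1)) ⊆
        Ico ((2:ℝ)^(-l) * (n i)) ((2:ℝ)^(-l) * ((n i) + 1))
    · left
      intro x hx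
      rw [cube_mem_iff hks hkc] at hx
      rw [cube_mem_iff hls hlc]
      exact fun i => hall i (hx i)
    · right
      push_neg at hall
      obtain ⟨i, hi⟩ := hall
      have := (dyad_int hlk (m i) (n i)).resolve_left hi
      rw [Set.disjoint_left]
      intro x hx hx'
      rw [cube_mem_iff hks hkc] at hx
      rw [cube_mem_iff hls hlc] at hx'
      exact (Set.disjoint_left.mp this) (hx i) (hx' i)
  rcases le_total l k with h | h
  · rcases main I J k l m n hks hkc hls hlc h with h' | h'
    · exact Or.inl h'
    · exact Or.inr (Or.inr h')
  · rcases main J I l k n m hls hlc hks hkc h with h' | h'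
    · exact Or.inr (Or.inl h')
    · exact Or.inr (Or.inr h'.symm)

lemma exists_maximal_superset {α : Type*} (𝒮 : Finset (Set α)) {S0 : Set α} (h : S0 ∈ 𝒮) :
    ∃ S ∈ 𝒮, S0 ⊆ S ∧ ∀ S' ∈ 𝒮, S ⊆ S' → S' = S := by
  classical
  obtain ⟨S, hS, hmax⟩ := Finset.exists_maximal (s := 𝒮.filter (fun S => S0 ⊆ S))
    ⟨S0, by simp [h]⟩
  simp only [Finset.mem_filter] at hS
  refine ⟨S, hS.1, hS.2, fun S' hS' hsub => ?_⟩
  exact le_antisymm (hmax (Finset.mem_filter.mpr ⟨hS', hS.2.trans hsub⟩) hsub) hsub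

lemma sum_le_sum_biUnion {α β : Type*} [DecidableEq α] (s : Finset β) (fib : β → Finset α)
    (t : Finset α) (h : t ⊆ s.biUnion fib) (w : α → ℝ≥0∞) :
    ∑ x ∈ t, w x ≤ ∑ b ∈ s, ∑ x ∈ fib b, w x := by
  classical
  have key : ∀ u : Finset β, ∑ x ∈ u.biUnion fib, w x ≤ ∑ b ∈ u, ∑ x ∈ fib b, w x := by
    intro u
    induction u using Finset.induction_on with
    | empty => simp
    | @insert a s' hnotmem ih =>
        rw [Finset.biUnion_insert, Finset.sum_insert hnotmem]
        calc ∑ x ∈ fib a ∪ s'.biUnion fib, w x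
            ≤ (∑ x ∈ fib a ∪ s'.biUnion fib, w x)
              + ∑ x ∈ fib a ∩ s'.biUnion fib, w x := le_self_add
          _ = (∑ x ∈ fib a, w x) + ∑ x ∈ s'.biUnion fib, w x :=
              Finset.sum_union_inter
          _ ≤ _ := by gcongr
  exact le_trans (Finset.sum_le_sum_of_subset h) (key s)

lemma lintegral_Ioo_rpow {r : ℝ} (hr : -1 < r) {c : ℝ} (hc : 0 ≤ c) :
    ∫⁻ t in Ioo 0 c, ENNReal.ofReal (t ^ r) = ENNReal.ofReal (c ^ (r+1) / (r+1)) := by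
  have hInt : IntegrableOn (fun t => t ^ r) (Ioo 0 c) volume := by
    have h1 := intervalIntegral.intervalIntegrable_rpow' (a := 0) (b := c) hr
    rwa [intervalIntegrable_iff_integrableOn_Ioo_of_le hc] at h1
  have hnn : 0 ≤ᵐ[volume.restrict (Ioo 0 c)] fun t => t ^ r :=
    (ae_restrict_iff' measurableSet_Ioo).mpr
      (ae_of_all _ fun t ht => Real.rpow_nonneg ht.1.le r)
  rw [← ofReal_integral_eq_lintegral_ofReal hInt hnn]
  congr 1
  rw [← MeasureTheory.integral_Ioc_eq_integral_Ioo, ← intervalIntegral.integral_of_le hc,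
    integral_rpow (Or.inl hr), Real.zero_rpow (by linarith)]
  ring

lemma cube_set_eq (Q : Cube N) :
    Q.set = univ.pi fun i => Ico (Q.corner i) (Q.corner i + Q.side) := by
  ext x
  simp [Cube.set, Set.mem_pi]

lemma cube_measurableSet (Q : Cube N) : MeasurableSet Q.set := by
  rw [cube_set_eq]
  exact MeasurableSet.univ_pi fun i => measurableSet_Ico

lemma cube_measure_ne_top (μ : Measure (Fin N → ℝ)) [IsFiniteMeasureOnCompacts μ]
    (Q : Cube N) : μ Q.set ≠ ∞ := by
  have hsub : Q.set ⊆ univ.pi fun i => Icc (Q.corner i) (Q.corner i + Q.side) := by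
    rw [cube_set_eq]
    exact Set.pi_mono fun i _ => Ico_subset_Icc_self
  exact ne_top_of_le_ne_top
    (IsCompact.measure_lt_top (isCompact_univ_pi fun i => isCompact_Icc)).ne
    (measure_mono hsub)

lemma dyadic_cover_null {μ : Measure (Fin N → ℝ)}
    (h : ∀ J : Cube N, J.IsDyadic → μ J.set = 0) : μ = 0 := by
  have hcov : (univ : Set (Fin N → ℝ)) = ⋃ m : Fin N → ℤ,
      (⟨fun i => (m i : ℝ), 1, one_pos⟩ : Cube N).set := by
    ext x
    simp only [mem_univ, true_iff, mem_iUnion]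
    refine ⟨fun i => ⌊x i⌋, fun i => ⟨Int.floor_le _, ?_⟩⟩
    exact lt_of_lt_of_le (Int.lt_floor_add_one _) (by norm_num)
  have : μ univ = 0 := by
    rw [hcov]
    refine measure_iUnion_null fun m => h _ ⟨0, m, by norm_num, fun i => by norm_num⟩
  exact Measure.measure_univ_eq_zero.mp this

end Aux
-- AUX END

/-- Carleson Embedding Theorem with the sharp constant `(p')^p`:
if `Σ_{I ⊆ J, I ∈ D} a_I ≤ A μ(J)` for all `J ∈ D`, then for `f ≥ 0` and `1 < p < ∞`,
`Σ_{I ∈ D} (μ(I)⁻¹ ∫_I f dμ)^p a_I ≤ (p')^p A ‖f‖_{L^p(μ)}^p`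
(terms with `μ(I) = 0` contribute `0`). -/
theorem carleson_embedding_theorem
    (N : ℕ) (μ : Measure (Fin N → ℝ)) (hRadon : μ.Regular)
    (a : Cube N → ℝ) (ha : ∀ I : Cube N, 0 ≤ a I) (A : ℝ)
    (hCar : ∀ J : Cube N, J.IsDyadic →
      ∀ F : Finset (Cube N), (↑F ⊆ {I : Cube N | I.IsDyadic ∧ I.set ⊆ J.set}) →
        ∑ I ∈ F, a I ≤ A * (μ J.set).toReal)
    (p : ℝ) (hp : 1 < p)
    (f : (Fin N → ℝ) → ℝ) (hf0 : ∀ x, 0 ≤ f x) (hfm : Measurable f)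
    (hfp : MemLp f (ENNReal.ofReal p) μ) :
    ∀ F : Finset (Cube N), (↑F ⊆ {I : Cube N | I.IsDyadic}) →
      ∑ I ∈ F, (((μ I.set).toReal)⁻¹ * ∫ x in I.set, f x ∂μ) ^ p * a I
        ≤ (p / (p - 1)) ^ p * A * ∫ x, f x ^ p ∂μ := by
  classical
  intro F hF
  haveI := hRadon
  have hp0 : (0:ℝ) < p := lt_trans one_pos hp
  have hp1 : (0:ℝ) < p - 1 := by linarith
  by_cases hdyAll : ∀ J : Cube N, J.IsDyadic → μ J.set = 0
  · have hμ0 : μ = 0 := dyadic_cover_null hdyAll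
    have h1 : ∀ I ∈ F, (((μ I.set).toReal)⁻¹ * ∫ x in I.set, f x ∂μ) ^ p * a I = 0 := by
      intro I hI
      have hres : μ.restrict I.set = 0 := Measure.restrict_eq_zero.mpr (by rw [hμ0]; rfl)
      rw [hres, integral_zero_measure, mul_zero, Real.zero_rpow hp0.ne', zero_mul]
    rw [Finset.sum_eq_zero h1, hμ0, integral_zero_measure, mul_zero]
  · push_neg at hdyAll
    obtain ⟨J0, hJ0dy, hJ0pos⟩ := hdyAll
    have hA : 0 ≤ A := by
      have h0 := hCar J0 hJ0dy ∅ (by simp)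
      simp only [Finset.sum_empty] at h0
      have hpos : 0 < (μ J0.set).toReal :=
        ENNReal.toReal_pos hJ0pos (cube_measure_ne_top μ J0)
      nlinarith
    -- setup
    set F' : Finset (Cube N) := F.filter (fun I => μ I.set ≠ 0) with hF'def
    have hF'F : F' ⊆ F := Finset.filter_subset _ _
    have hF'dy : ∀ I ∈ F', I.IsDyadic := fun I hI => hF (hF'F hI)
    have hF'pos : ∀ I ∈ F', μ I.set ≠ 0 := fun I hI => (Finset.mem_filter.mp hI).2
    set c : Cube N → ℝ := fun I => ((μ I.set).toReal)⁻¹ * ∫ x in I.set, f x ∂μ with hc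
    have hint : ∀ I : Cube N, IntegrableOn f I.set μ := by
      intro I
      haveI : IsFiniteMeasure (μ.restrict I.set) :=
        ⟨by rw [Measure.restrict_apply_univ]; exact (cube_measure_ne_top μ I).lt_top⟩
      exact MemLp.integrable (ENNReal.one_le_ofReal.mpr hp.le) (hfp.restrict _)
    have hc0 : ∀ I, 0 ≤ c I := fun I =>
      mul_nonneg (inv_nonneg.mpr ENNReal.toReal_nonneg)
        (integral_nonneg fun x => hf0 x)
    set g : (Fin N → ℝ) → ℝ≥0∞ := fun x => ENNReal.ofReal (f x) with hg
    have hgm : Measurable g := hfm.ennreal_ofReal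
    have hIg : ∀ I : Cube N, ENNReal.ofReal (∫ x in I.set, f x ∂μ) = ∫⁻ x in I.set, g x ∂μ :=
      fun I => ofReal_integral_eq_lintegral_ofReal (hint I) (ae_of_all _ fun x => hf0 x)
    set MN : (Fin N → ℝ) → ℝ≥0 :=
      fun x => F'.sup fun I => if x ∈ I.set then (c I).toNNReal else 0 with hMN
    set M : (Fin N → ℝ) → ℝ := fun x => (MN x : ℝ) with hM
    have hM0 : ∀ x, 0 ≤ M x := fun x => (MN x).coe_nonneg
    have hsupm : ∀ (s : Finset (Cube N)),
        Measurable fun x => (s.sup fun I => if x ∈ I.set then (c I).toNNReal else 0 : ℝ≥0) := by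
      intro s
      induction s using Finset.induction_on with
      | empty => simpa using measurable_const
      | @insert I s' hns ih =>
          have h1 : Measurable fun x => if x ∈ I.set then (c I).toNNReal else (0:ℝ≥0) :=
            Measurable.ite (cube_measurableSet I) measurable_const measurable_const
          simpa [Finset.sup_insert] using h1.max ih
    have hMNm : Measurable MN := hsupm F'
    have hMmeas : Measurable M := measurable_coe_nnreal_real.comp hMNm
    have hMiff : ∀ t : ℝ, 0 ≤ t → ∀ x, (t < M x ↔ ∃ I ∈ F', x ∈ I.set ∧ t < c I) := by
      intro t ht x
      constructor
      · intro h
        have h' : t.toNNReal < MN x := (Real.toNNReal_lt_iff_lt_coe ht).mpr h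
        rw [hMN, Finset.lt_sup_iff] at h'
        obtain ⟨I, hI, hlt⟩ := h'
        by_cases hx : x ∈ I.set
        · rw [if_pos hx] at hlt
          refine ⟨I, hI, hx, ?_⟩
          have h2 : (t.toNNReal : ℝ) < ((c I).toNNReal : ℝ) := by exact_mod_cast hlt
          rwa [Real.coe_toNNReal t ht, Real.coe_toNNReal _ (hc0 I)] at h2
        · rw [if_neg hx] at hlt
          exact absurd hlt (by simp)
      · rintro ⟨I, hI, hx, hlt⟩
        have h1 : (c I).toNNReal ≤ MN x := by
          have h2 : (if x ∈ I.set then (c I).toNNReal else 0) ≤ MN x :=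
            Finset.le_sup (f := fun I => if x ∈ I.set then (c I).toNNReal else 0) hI
          rwa [if_pos hx] at h2
        have h2 : ((c I).toNNReal : ℝ) ≤ M x := by exact_mod_cast h1
        rw [Real.coe_toNNReal _ (hc0 I)] at h2
        linarith
    set ν := μ.withDensity g with hν
    -- weak Carleson and weak-type estimates at each level t > 0
    have hwk : ∀ t : ℝ, 0 < t →
        ((∑ I ∈ F'.filter (fun I => t < c I), ENNReal.ofReal (a I))
            ≤ ENNReal.ofReal A * μ {x | t < M x}) ∧
          ENNReal.ofReal t * μ {x | t < M x} ≤ ν {x | t < M x} := by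
      intro t ht
      set Gt := F'.filter (fun I => t < c I) with hGt
      set 𝒮t := Gt.image Cube.set with h𝒮t
      set Mxs := 𝒮t.filter (fun S => ∀ S' ∈ 𝒮t, S ⊆ S' → S' = S) with hMxs
      have hMxs𝒮 : Mxs ⊆ 𝒮t := Finset.filter_subset _ _
      have hSmem : ∀ S ∈ Mxs, ∃ J, J ∈ Gt ∧ J.set = S := by
        intro S hS
        obtain ⟨J, hJ, hJS⟩ := Finset.mem_image.mp (hMxs𝒮 hS)
        exact ⟨J, hJ, hJS⟩
      have hmaxsub : ∀ I ∈ Gt, ∃ S ∈ Mxs, I.set ⊆ S := by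
        intro I hI
        obtain ⟨S, hS, hsub, hm⟩ :=
          exists_maximal_superset 𝒮t (Finset.mem_image_of_mem Cube.set hI)
        exact ⟨S, Finset.mem_filter.mpr ⟨hS, hm⟩, hsub⟩
      have hmeasS : ∀ S ∈ Mxs, MeasurableSet S := by
        intro S hS
        obtain ⟨J, _, hJS⟩ := hSmem S hS
        rw [← hJS]; exact cube_measurableSet J
      have hsetEq : {x | t < M x} = ⋃ S ∈ Mxs, S := by
        ext x
        simp only [mem_setOf_eq, mem_iUnion, exists_prop]
        rw [hMiff t ht.le x]
        constructor
        · rintro ⟨I, hI, hx, hlt⟩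
          have hIGt : I ∈ Gt := Finset.mem_filter.mpr ⟨hI, hlt⟩
          obtain ⟨S, hS, hsub⟩ := hmaxsub I hIGt
          exact ⟨S, hS, hsub hx⟩
        · rintro ⟨S, hS, hx⟩
          obtain ⟨J, hJ, hJS⟩ := hSmem S hS
          rcases Finset.mem_filter.mp hJ with ⟨hJF', hJlt⟩
          exact ⟨J, hJF', by rw [hJS]; exact hx, hJlt⟩
      have hdisj : (↑Mxs : Set (Set (Fin N → ℝ))).PairwiseDisjoint id := by
        intro S hS S' hS' hne
        have hSM : S ∈ Mxs := hS
        have hS'M : S' ∈ Mxs := hS'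
        obtain ⟨J, hJ, hJS⟩ := hSmem S hSM
        obtain ⟨J', hJ', hJS'⟩ := hSmem S' hS'M
        have hmaxS := (Finset.mem_filter.mp hSM).2
        have hmaxS' := (Finset.mem_filter.mp hS'M).2
        have hdyJ : J.IsDyadic := hF'dy _ (Finset.mem_filter.mp hJ).1
        have hdyJ' : J'.IsDyadic := hF'dy _ (Finset.mem_filter.mp hJ').1
        rcases dyadic_subset_or_disjoint hdyJ hdyJ' with h | h | h
        · exact absurd (hmaxS S' (hMxs𝒮 hS'M) (by rw [← hJS, ← hJS']; exact h)).symm hne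
        · exact absurd (hmaxS' S (hMxs𝒮 hSM) (by rw [← hJS, ← hJS']; exact h)) hne
        · have : Disjoint S S' := by rw [← hJS, ← hJS']; exact h
          simpa [Function.onFun] using this
      have hGtsub : Gt ⊆ Mxs.biUnion (fun S => Gt.filter (fun I => I.set ⊆ S)) := by
        intro I hI
        obtain ⟨S, hS, hsub⟩ := hmaxsub I hI
        exact Finset.mem_biUnion.mpr ⟨S, hS, Finset.mem_filter.mpr ⟨hI, hsub⟩⟩
      have hfib : ∀ S ∈ Mxs, ∑ I ∈ Gt.filter (fun I => I.set ⊆ S), ENNReal.ofReal (a I)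
          ≤ ENNReal.ofReal A * μ S := by
        intro S hS
        obtain ⟨J, hJ, hJS⟩ := hSmem S hS
        have hdyJ : J.IsDyadic := hF'dy _ (Finset.mem_filter.mp hJ).1
        have h1 : ∑ I ∈ Gt.filter (fun I => I.set ⊆ S), a I ≤ A * (μ J.set).toReal := by
          apply hCar J hdyJ
          intro I hI
          rcases Finset.mem_filter.mp hI with ⟨hIGt, hIS⟩
          exact ⟨hF'dy _ (Finset.mem_filter.mp hIGt).1, by rw [hJS]; exact hIS⟩
        calc ∑ I ∈ Gt.filter (fun I => I.set ⊆ S), ENNReal.ofReal (a I)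
            = ENNReal.ofReal (∑ I ∈ Gt.filter (fun I => I.set ⊆ S), a I) :=
              (ENNReal.ofReal_sum_of_nonneg fun I _ => ha I).symm
          _ ≤ ENNReal.ofReal (A * (μ J.set).toReal) := ENNReal.ofReal_le_ofReal h1
          _ = ENNReal.ofReal A * ENNReal.ofReal ((μ J.set).toReal) := ENNReal.ofReal_mul hA
          _ = ENNReal.ofReal A * μ S := by
              rw [ENNReal.ofReal_toReal (cube_measure_ne_top μ J), hJS]
      have hμU : μ {x | t < M x} = ∑ S ∈ Mxs, μ S := by
        rw [hsetEq]; exact measure_biUnion_finset hdisj hmeasS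
      constructor
      · calc ∑ I ∈ Gt, ENNReal.ofReal (a I)
            ≤ ∑ S ∈ Mxs, ∑ I ∈ Gt.filter (fun I => I.set ⊆ S), ENNReal.ofReal (a I) :=
              sum_le_sum_biUnion Mxs _ Gt hGtsub _
          _ ≤ ∑ S ∈ Mxs, ENNReal.ofReal A * μ S := Finset.sum_le_sum hfib
          _ = ENNReal.ofReal A * ∑ S ∈ Mxs, μ S := by rw [Finset.mul_sum]
          _ = ENNReal.ofReal A * μ {x | t < M x} := by rw [hμU]
      · have hνU : ν {x | t < M x} = ∑ S ∈ Mxs, ν S := by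
          rw [hsetEq]; exact measure_biUnion_finset hdisj hmeasS
        have hper : ∀ S ∈ Mxs, ENNReal.ofReal t * μ S ≤ ν S := by
          intro S hS
          obtain ⟨J, hJ, hJS⟩ := hSmem S hS
          have hJlt : t < c J := (Finset.mem_filter.mp hJ).2
          have hJpos : μ J.set ≠ 0 := hF'pos _ (Finset.mem_filter.mp hJ).1
          have hm : 0 < (μ J.set).toReal :=
            ENNReal.toReal_pos hJpos (cube_measure_ne_top μ J)
          have h2 : t * (μ J.set).toReal < ∫ x in J.set, f x ∂μ := by
            simp only [hc] at hJlt
            calc t * (μ J.set).toReal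
                < (((μ J.set).toReal)⁻¹ * ∫ x in J.set, f x ∂μ) * (μ J.set).toReal :=
                  mul_lt_mul_of_pos_right hJlt hm
              _ = ∫ x in J.set, f x ∂μ := by field_simp
          rw [← hJS]
          calc ENNReal.ofReal t * μ J.set
              = ENNReal.ofReal (t * (μ J.set).toReal) := by
                rw [ENNReal.ofReal_mul ht.le, ENNReal.ofReal_toReal (cube_measure_ne_top μ J)]
            _ ≤ ENNReal.ofReal (∫ x in J.set, f x ∂μ) := ENNReal.ofReal_le_ofReal h2.le
            _ = ∫⁻ x in J.set, g x ∂μ := hIg J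
            _ = ν J.set := (withDensity_apply g (cube_measurableSet J)).symm
        calc ENNReal.ofReal t * μ {x | t < M x} = ∑ S ∈ Mxs, ENNReal.ofReal t * μ S := by
              rw [hμU, Finset.mul_sum]
          _ ≤ ∑ S ∈ Mxs, ν S := Finset.sum_le_sum hper
          _ = ν {x | t < M x} := hνU.symm
    haveI : SigmaFinite μ := by infer_instance
    set q : ℝ := p / (p - 1) with hqdef
    have hq0 : 0 < q := div_pos hp0 hp1
    have hpq : p.HolderConjugate q := by rw [hqdef]; exact Real.HolderConjugate.conjExponent hp
    have hmlt : ∀ t : ℝ, MeasurableSet {x | t < M x} :=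
      fun t => measurableSet_lt measurable_const hMmeas
    have hlayer : ∫⁻ x, ENNReal.ofReal (M x ^ p) ∂μ
        = ENNReal.ofReal p * ∫⁻ t in Ioi 0, μ {x | t < M x} * ENNReal.ofReal (t ^ (p - 1)) :=
      lintegral_rpow_eq_lintegral_meas_lt_mul μ (ae_of_all _ hM0) hMmeas.aemeasurable hp0
    set L := ∫⁻ x, ENNReal.ofReal (M x ^ p) ∂μ with hLdef
    set Gp := ∫⁻ x, g x ^ p ∂μ with hGpdef
    have hUmeas : MeasurableSet (⋃ I ∈ F', I.set) :=
      Finset.measurableSet_biUnion F' fun I _ => cube_measurableSet I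
    -- L is finite
    have hLfin : L ≠ ∞ := by
      refine ne_of_lt ?_
      set B : ℝ≥0 := F'.sup fun I => (c I).toNNReal with hB
      have hMB : ∀ x, M x ≤ B := by
        intro x
        have h1 : MN x ≤ B := Finset.sup_mono_fun fun I _ => by
          split_ifs
          · exact le_refl _
          · exact zero_le
        exact_mod_cast h1
      have hpt : ∀ x, ENNReal.ofReal (M x ^ p) ≤
          (⋃ I ∈ F', I.set).indicator (fun _ => ENNReal.ofReal ((B:ℝ) ^ p)) x := by
        intro x
        by_cases hx : x ∈ ⋃ I ∈ F', I.set
        · rw [indicator_of_mem hx]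
          exact ENNReal.ofReal_le_ofReal (Real.rpow_le_rpow (hM0 x) (hMB x) hp0.le)
        · rw [indicator_of_notMem hx]
          have hMx : M x = 0 := by
            rcases eq_or_lt_of_le (hM0 x) with h | h
            · exact h.symm
            · obtain ⟨I, hI, hxI, -⟩ := (hMiff 0 le_rfl x).mp h
              exact absurd (mem_iUnion₂.mpr ⟨I, hI, hxI⟩) hx
          rw [hMx, Real.zero_rpow hp0.ne', ENNReal.ofReal_zero]
      have hUfin : μ (⋃ I ∈ F', I.set) < ∞ :=
        lt_of_le_of_lt (measure_biUnion_finset_le F' _)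
          (ENNReal.sum_lt_top.mpr fun I _ => (cube_measure_ne_top μ I).lt_top)
      calc L ≤ ∫⁻ x, (⋃ I ∈ F', I.set).indicator (fun _ => ENNReal.ofReal ((B:ℝ)^p)) x ∂μ :=
            lintegral_mono hpt
        _ = ENNReal.ofReal ((B:ℝ)^p) * μ (⋃ I ∈ F', I.set) := by
            rw [lintegral_indicator hUmeas, setLIntegral_const]
        _ < ∞ := ENNReal.mul_lt_top ENNReal.ofReal_lt_top hUfin
    -- Fubini step
    have hswap : ∫⁻ t in Ioi 0, ν {x | t < M x} * ENNReal.ofReal (t ^ (p-2))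
        = ∫⁻ x, g x * ENNReal.ofReal (M x ^ (p-1) / (p-1)) ∂μ := by
      have h1 : ∀ t : ℝ, ν {x | t < M x} * ENNReal.ofReal (t ^ (p-2))
          = ∫⁻ x, {x | t < M x}.indicator g x * ENNReal.ofReal (t ^ (p-2)) ∂μ := by
        intro t
        rw [hν, withDensity_apply g (hmlt t), ← lintegral_indicator (hmlt t),
          lintegral_mul_const _ (hgm.indicator (hmlt t))]
      have h2 : Measurable (Function.uncurry fun (t : ℝ) (x : Fin N → ℝ) =>
          {x | t < M x}.indicator g x * ENNReal.ofReal (t ^ (p-2))) := by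
        have heq : (Function.uncurry fun (t : ℝ) (x : Fin N → ℝ) =>
            {x | t < M x}.indicator g x * ENNReal.ofReal (t ^ (p-2))) =
            fun z : ℝ × (Fin N → ℝ) =>
              {z : ℝ × (Fin N → ℝ) | z.1 < M z.2}.indicator (fun z => g z.2) z
                * ENNReal.ofReal (z.1 ^ (p-2)) := by
          funext z
          rcases z with ⟨t, x⟩
          simp only [Function.uncurry, Set.indicator_apply, mem_setOf_eq]
        rw [heq]
        exact ((hgm.comp measurable_snd).indicator
          (measurableSet_lt measurable_fst (hMmeas.comp measurable_snd))).mul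
          ((measurable_fst.pow measurable_const).ennreal_ofReal)
      calc ∫⁻ t in Ioi 0, ν {x | t < M x} * ENNReal.ofReal (t ^ (p-2))
          = ∫⁻ t in Ioi 0, ∫⁻ x, {x | t < M x}.indicator g x
              * ENNReal.ofReal (t ^ (p-2)) ∂μ := lintegral_congr fun t => h1 t
        _ = ∫⁻ x, ∫⁻ t in Ioi 0, {x' | t < M x'}.indicator g x
              * ENNReal.ofReal (t ^ (p-2)) ∂volume ∂μ := lintegral_lintegral_swap h2.aemeasurable
        _ = ∫⁻ x, g x * ENNReal.ofReal (M x ^ (p-1) / (p-1)) ∂μ := by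
            refine lintegral_congr fun x => ?_
            have h3 : ∀ t : ℝ, {x' | t < M x'}.indicator g x * ENNReal.ofReal (t ^ (p-2))
                = (Iio (M x)).indicator (fun t => g x * ENNReal.ofReal (t ^ (p-2))) t := by
              intro t
              by_cases h : t < M x
              · simp [Set.indicator_apply, mem_setOf_eq, h]
              · simp [Set.indicator_apply, mem_setOf_eq, h]
            rw [lintegral_congr h3, lintegral_indicator measurableSet_Iio,
              Measure.restrict_restrict measurableSet_Iio,
              show Iio (M x) ∩ Ioi 0 = Ioo 0 (M x) by rw [inter_comm, Ioi_inter_Iio],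
              lintegral_const_mul' _ _ ENNReal.ofReal_ne_top,
              lintegral_Ioo_rpow (by linarith) (hM0 x),
              show p - 2 + 1 = p - 1 by ring]
    -- the sharp maximal bound
    have hL2 : L ≤ ENNReal.ofReal q * ∫⁻ x, g x * ENNReal.ofReal (M x ^ (p-1)) ∂μ := by
      have hstep : ∫⁻ t in Ioi 0, μ {x | t < M x} * ENNReal.ofReal (t ^ (p-1))
          ≤ ∫⁻ t in Ioi 0, ν {x | t < M x} * ENNReal.ofReal (t ^ (p-2)) := by
        refine lintegral_mono_ae ((ae_restrict_iff' measurableSet_Ioi).mpr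
          (ae_of_all _ fun t ht => ?_))
        have hb := (hwk t ht).2
        have hsplit : ENNReal.ofReal (t ^ (p-1))
            = ENNReal.ofReal t * ENNReal.ofReal (t ^ (p-2)) := by
          rw [← ENNReal.ofReal_mul ht.le]
          congr 1
          rw [show p - 1 = 1 + (p-2) by ring, Real.rpow_add ht, Real.rpow_one]
        calc μ {x | t < M x} * ENNReal.ofReal (t ^ (p-1))
            = (ENNReal.ofReal t * μ {x | t < M x}) * ENNReal.ofReal (t ^ (p-2)) := by
              rw [hsplit]; ring
          _ ≤ ν {x | t < M x} * ENNReal.ofReal (t ^ (p-2)) := mul_le_mul_left hb _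
      have hconst : ∀ x, g x * ENNReal.ofReal (M x ^ (p-1) / (p-1))
          = ENNReal.ofReal ((p-1)⁻¹) * (g x * ENNReal.ofReal (M x ^ (p-1))) := by
        intro x
        rw [div_eq_mul_inv, ENNReal.ofReal_mul (Real.rpow_nonneg (hM0 x) _)]
        ring
      calc L = ENNReal.ofReal p
            * ∫⁻ t in Ioi 0, μ {x | t < M x} * ENNReal.ofReal (t ^ (p-1)) := hlayer
        _ ≤ ENNReal.ofReal p
            * ∫⁻ t in Ioi 0, ν {x | t < M x} * ENNReal.ofReal (t ^ (p-2)) :=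
            mul_le_mul_right hstep _
        _ = ENNReal.ofReal p * ∫⁻ x, g x * ENNReal.ofReal (M x ^ (p-1) / (p-1)) ∂μ := by
            rw [hswap]
        _ = ENNReal.ofReal p * (ENNReal.ofReal ((p-1)⁻¹)
            * ∫⁻ x, g x * ENNReal.ofReal (M x ^ (p-1)) ∂μ) := by
            rw [lintegral_congr hconst, lintegral_const_mul' _ _ ENNReal.ofReal_ne_top]
        _ = ENNReal.ofReal q * ∫⁻ x, g x * ENNReal.ofReal (M x ^ (p-1)) ∂μ := by
            rw [← mul_assoc, ← ENNReal.ofReal_mul hp0.le, ← div_eq_mul_inv]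
    have hMq : ∀ x, (ENNReal.ofReal (M x ^ (p-1))) ^ q = ENNReal.ofReal (M x ^ p) := by
      intro x
      rw [ENNReal.ofReal_rpow_of_nonneg (Real.rpow_nonneg (hM0 x) _) hq0.le,
        ← Real.rpow_mul (hM0 x)]
      congr 2
      rw [hqdef]
      field_simp
    have hH : ∫⁻ x, g x * ENNReal.ofReal (M x ^ (p-1)) ∂μ ≤ Gp ^ (1/p) * L ^ (1/q) := by
      have h1 := ENNReal.lintegral_mul_le_Lp_mul_Lq μ hpq (f := g)
        (g := fun x => ENNReal.ofReal (M x ^ (p-1))) hgm.aemeasurable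
        (((hMmeas.pow measurable_const).ennreal_ofReal).aemeasurable)
      simp only [Pi.mul_apply] at h1
      have h2 : ∫⁻ x, (ENNReal.ofReal (M x ^ (p-1))) ^ q ∂μ = L := lintegral_congr hMq
      rw [h2] at h1
      exact h1
    have hMLp : L ≤ ENNReal.ofReal (q ^ p) * Gp := by
      by_cases hL0 : L = 0
      · rw [hL0]; exact zero_le
      · have hchain : L ≤ ENNReal.ofReal q * (Gp ^ (1/p) * L ^ (1/q)) :=
          le_trans hL2 (mul_le_mul_right hH _)
        have hLq0 : L ^ (1/q) ≠ 0 := by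
          rw [Ne, ENNReal.rpow_eq_zero_iff]
          rintro (⟨h, -⟩ | ⟨h, -⟩)
          · exact hL0 h
          · exact hLfin h
        have hLqt : L ^ (1/q) ≠ ∞ := ENNReal.rpow_ne_top_of_nonneg (by positivity) hLfin
        have hLsplit : L = L ^ (1/p) * L ^ (1/q) := by
          rw [← ENNReal.rpow_add _ _ hL0 hLfin,
            show 1/p + 1/q = 1 by rw [one_div, one_div]; exact hpq.inv_add_inv_eq_one,
            ENNReal.rpow_one]
        have h4 : L ^ (1/p) * L ^ (1/q) ≤ (ENNReal.ofReal q * Gp ^ (1/p)) * L ^ (1/q) := by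
          calc L ^ (1/p) * L ^ (1/q) = L := hLsplit.symm
            _ ≤ ENNReal.ofReal q * (Gp ^ (1/p) * L ^ (1/q)) := hchain
            _ = (ENNReal.ofReal q * Gp ^ (1/p)) * L ^ (1/q) := by ring
        have h5 : L ^ (1/p) ≤ ENNReal.ofReal q * Gp ^ (1/p) :=
          (ENNReal.mul_le_mul_iff_left hLq0 hLqt).mp h4
        have h6 := ENNReal.rpow_le_rpow h5 hp0.le
        have e1 : (L ^ (1/p)) ^ p = L := by
          rw [← ENNReal.rpow_mul, show (1/p) * p = 1 by field_simp, ENNReal.rpow_one]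
        have e2 : ((ENNReal.ofReal q) * Gp ^ (1/p)) ^ p = ENNReal.ofReal (q^p) * Gp := by
          rw [ENNReal.mul_rpow_of_nonneg _ _ hp0.le, ← ENNReal.rpow_mul,
            show (1/p) * p = 1 by field_simp, ENNReal.rpow_one,
            ENNReal.ofReal_rpow_of_nonneg hq0.le hp0.le]
        rw [e1, e2] at h6
        exact h6
    -- the sum is controlled by A * L
    have hpne : p ≠ 0 := hp0.ne'
    have hWm1 : Measurable fun t : ℝ => ENNReal.ofReal (t ^ (p-1)) :=
      (measurable_id.pow measurable_const).ennreal_ofReal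
    have hSL : ∑ I ∈ F', ENNReal.ofReal (c I ^ p * a I) ≤ ENNReal.ofReal A * L := by
      have hterm : ∀ I ∈ F', ENNReal.ofReal (c I ^ p * a I)
          = ∫⁻ t in Ioi 0, ENNReal.ofReal p * (ENNReal.ofReal (a I)
              * (Iio (c I)).indicator (fun t => ENNReal.ofReal (t ^ (p-1))) t) := by
        intro I _
        rw [lintegral_const_mul' _ _ ENNReal.ofReal_ne_top,
          lintegral_const_mul' _ _ ENNReal.ofReal_ne_top,
          lintegral_indicator measurableSet_Iio,
          Measure.restrict_restrict measurableSet_Iio,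
          show Iio (c I) ∩ Ioi 0 = Ioo 0 (c I) by rw [inter_comm, Ioi_inter_Iio],
          lintegral_Ioo_rpow (by linarith) (hc0 I),
          show p - 1 + 1 = p by ring,
          ← ENNReal.ofReal_mul (ha I), ← ENNReal.ofReal_mul hp0.le]
        congr 1
        field_simp
      have hmeasI : ∀ I ∈ F', Measurable fun t : ℝ => ENNReal.ofReal (a I)
          * (Iio (c I)).indicator (fun t => ENNReal.ofReal (t ^ (p-1))) t :=
        fun I _ => measurable_const.mul (hWm1.indicator measurableSet_Iio)
      calc ∑ I ∈ F', ENNReal.ofReal (c I ^ p * a I)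
          = ∫⁻ t in Ioi 0, ENNReal.ofReal p * ∑ I ∈ F', (ENNReal.ofReal (a I)
              * (Iio (c I)).indicator (fun t => ENNReal.ofReal (t ^ (p-1))) t) := by
            rw [Finset.sum_congr rfl hterm,
              ← lintegral_finset_sum _ (fun I hI => (hmeasI I hI).const_mul _)]
            exact lintegral_congr fun t => (Finset.mul_sum _ _ _).symm
        _ ≤ ∫⁻ t in Ioi 0, ENNReal.ofReal p * (ENNReal.ofReal A * μ {x | t < M x}
              * ENNReal.ofReal (t ^ (p-1))) := by
            refine lintegral_mono_ae ((ae_restrict_iff' measurableSet_Ioi).mpr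
              (ae_of_all _ fun t ht => ?_))
            refine mul_le_mul_right ?_ _
            have hsum_eq : ∑ I ∈ F', (ENNReal.ofReal (a I)
                * (Iio (c I)).indicator (fun t => ENNReal.ofReal (t ^ (p-1))) t)
                = (∑ I ∈ F'.filter (fun I => t < c I), ENNReal.ofReal (a I))
                    * ENNReal.ofReal (t ^ (p-1)) := by
              have hite : ∀ I : Cube N, ENNReal.ofReal (a I)
                  * (Iio (c I)).indicator (fun t => ENNReal.ofReal (t ^ (p-1))) t
                  = if t < c I then ENNReal.ofReal (a I) * ENNReal.ofReal (t ^ (p-1)) else 0 := by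
                intro I
                by_cases h : t < c I
                · simp [Set.indicator_apply, h]
                · simp [Set.indicator_apply, h]
              rw [Finset.sum_congr rfl fun I _ => hite I, ← Finset.sum_filter,
                ← Finset.sum_mul]
            rw [hsum_eq]
            exact mul_le_mul_left (hwk t ht).1 _
        _ = ENNReal.ofReal A * L := by
            calc ∫⁻ t in Ioi 0, ENNReal.ofReal p * (ENNReal.ofReal A * μ {x | t < M x}
                  * ENNReal.ofReal (t ^ (p-1)))
                = ∫⁻ t in Ioi 0, (ENNReal.ofReal p * ENNReal.ofReal A)
                  * (μ {x | t < M x} * ENNReal.ofReal (t ^ (p-1))) :=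
                  lintegral_congr fun t => by ring
              _ = (ENNReal.ofReal p * ENNReal.ofReal A)
                  * ∫⁻ t in Ioi 0, μ {x | t < M x} * ENNReal.ofReal (t ^ (p-1)) :=
                  lintegral_const_mul' _ _
                    (ENNReal.mul_ne_top ENNReal.ofReal_ne_top ENNReal.ofReal_ne_top)
              _ = ENNReal.ofReal A * L := by rw [hlayer]; ring
    -- reduce the goal sum to F'
    have hvanish : ∀ I ∈ F, I ∉ F' →
        (((μ I.set).toReal)⁻¹ * ∫ x in I.set, f x ∂μ) ^ p * a I = 0 := by
      intro I hI hI'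
      have hz : μ I.set = 0 := by
        by_contra h
        exact hI' (Finset.mem_filter.mpr ⟨hI, h⟩)
      have hres : μ.restrict I.set = 0 := Measure.restrict_eq_zero.mpr hz
      rw [hres, integral_zero_measure, mul_zero, Real.zero_rpow hp0.ne', zero_mul]
    rw [← Finset.sum_subset hF'F hvanish]
    -- convert everything back to the reals
    have hterm_nonneg : ∀ I, 0 ≤ c I ^ p * a I := fun I =>
      mul_nonneg (Real.rpow_nonneg (hc0 I) p) (ha I)
    have hLHS : ∑ I ∈ F', (((μ I.set).toReal)⁻¹ * ∫ x in I.set, f x ∂μ) ^ p * a I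
        = (∑ I ∈ F', ENNReal.ofReal (c I ^ p * a I)).toReal := by
      rw [ENNReal.toReal_sum fun I _ => ENNReal.ofReal_ne_top]
      exact Finset.sum_congr rfl fun I _ => (ENNReal.toReal_ofReal (hterm_nonneg I)).symm
    have hGp_eq : Gp = ∫⁻ x, ENNReal.ofReal (f x ^ p) ∂μ :=
      lintegral_congr fun x => ENNReal.ofReal_rpow_of_nonneg (hf0 x) hp0.le
    have hint_eq : ∫ x, f x ^ p ∂μ = Gp.toReal := by
      rw [integral_eq_lintegral_of_nonneg_ae (ae_of_all _ fun x => Real.rpow_nonneg (hf0 x) p)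
        ((hfm.pow measurable_const).aestronglyMeasurable), ← hGp_eq]
    have hGpfin : Gp ≠ ∞ := by
      have h2 := hfp.2
      rw [eLpNorm_eq_lintegral_rpow_enorm_toReal (ENNReal.ofReal_pos.mpr hp0).ne'
        ENNReal.ofReal_ne_top, ENNReal.toReal_ofReal hp0.le] at h2
      have h3 : ∫⁻ x, ‖f x‖ₑ ^ p ∂μ = Gp :=
        lintegral_congr fun x => by
          simp only [hg]
          rw [Real.enorm_eq_ofReal (hf0 x)]
      rw [h3] at h2
      intro hGt
      rw [hGt, ENNReal.top_rpow_of_pos (by positivity)] at h2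
      exact lt_irrefl _ h2
    have hfinal : (∑ I ∈ F', ENNReal.ofReal (c I ^ p * a I))
        ≤ ENNReal.ofReal A * (ENNReal.ofReal (q ^ p) * Gp) :=
      le_trans hSL (mul_le_mul_right hMLp _)
    have hRfin : ENNReal.ofReal A * (ENNReal.ofReal (q ^ p) * Gp) ≠ ∞ :=
      ENNReal.mul_ne_top ENNReal.ofReal_ne_top
        (ENNReal.mul_ne_top ENNReal.ofReal_ne_top hGpfin)
    rw [hLHS, hint_eq]
    calc (∑ I ∈ F', ENNReal.ofReal (c I ^ p * a I)).toReal
        ≤ (ENNReal.ofReal A * (ENNReal.ofReal (q ^ p) * Gp)).toReal :=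
          ENNReal.toReal_mono hRfin hfinal
      _ = A * (q ^ p * Gp.toReal) := by
          rw [ENNReal.toReal_mul, ENNReal.toReal_mul, ENNReal.toReal_ofReal hA,
            ENNReal.toReal_ofReal (Real.rpow_nonneg hq0.le p)]
      _ = q ^ p * A * Gp.toReal := by ring



end CBD
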